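/- Let q be a prime power, let ℓ ≥ 1 be an integer, let n = q^ℓ + 1 and m = 2ℓ, and let β be a primitive n-th root of unity in GF(q^m). Let δ be an integer with 2 ≤ δ ≤ n. If c = (c_0, c_1, ..., c_{n−1}) ∈ GF(q)^n is a nonzero vector (with GF(q) viewed as a subfield of GF(q^m)) such that ∑_{i=0}^{n−1} c_i β^{it} = 0 for every integer t with 0 ≤ t ≤ δ − 2, then the Hamming weight |{i : c_i ≠ 0}| of c is at least 2(δ − 1). -/

import Mathlib

open scoped Classical

/-- BCH-type bound for the reversible code `C_{(q,n,δ,0)}` of length `n = q^ℓ + 1`: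
any nonzero codeword, i.e. any nonzero `c ∈ GF(q)^n` with
`∑_i c_i β^{it} = 0` for all `0 ≤ t ≤ δ − 2`, has Hamming weight at least `2(δ − 1)`. -/
theorem reversible_BCH_bound_q_pow_add_one (q ℓ n m δ : ℕ) (hq : IsPrimePow q)
    (hℓ : 1 ≤ ℓ) (hn : n = q ^ ℓ + 1) (hm : m = 2 * ℓ)
    (hδ : 2 ≤ δ) (hδ' : δ ≤ n)
    (F E : Type) [Field F] [Fintype F] [Field E] [Fintype E] [Algebra F E]
    (hF : Fintype.card F = q) (hE : Fintype.card E = q ^ m)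
    (β : E) (hβ : IsPrimitiveRoot β n)
    (c : Fin n → F) (hc : c ≠ 0)
    (hzero : ∀ t : ℕ, t ≤ δ - 2 →
      ∑ i : Fin n, algebraMap F E (c i) * β ^ ((i : ℕ) * t) = 0) :
    2 * (δ - 1) ≤ (Finset.univ.filter fun i : Fin n => c i ≠ 0).card := by
  classical
  obtain ⟨p, e, hp', he, hpe⟩ := hq
  have hp : p.Prime := Nat.prime_iff.mpr hp'
  haveI := Fact.mk hp
  -- basic facts
  have hq2 : 2 ≤ q := by
    rw [← hpe]; calc 2 ≤ p := hp.two_le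
    _ ≤ p ^ e := Nat.le_self_pow (by omega) p
  have hn0 : n ≠ 0 := by
    have : 1 ≤ q ^ ℓ := Nat.one_le_pow _ _ (by omega)
    omega
  have hβn : β ^ n = 1 := hβ.pow_eq_one
  have hβ0 : β ≠ 0 := by
    intro h
    rw [h, zero_pow hn0] at hβn
    exact zero_ne_one hβn
  -- characteristic of E is p
  obtain ⟨r, hr⟩ := CharP.exists E
  haveI := hr
  obtain ⟨k, hrp, hcard⟩ := FiniteField.card E r
  have hpr : p = r := by
    have hem : p ^ (e * m) = r ^ (k : ℕ) := by
      rw [pow_mul, hpe, ← hE, hcard]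
    have h1 : p ∣ r ^ (k : ℕ) := by
      rw [← hem]
      exact dvd_pow_self p (Nat.mul_ne_zero he.ne' (by omega))
    exact (Nat.prime_dvd_prime_iff_eq hp hrp).mp (hp.dvd_of_dvd_pow h1)
  haveI : CharP E p := hpr ▸ hr
  haveI : ExpChar E p := ExpChar.prime hp
  -- β ^ (q ^ ℓ) = β⁻¹
  have hβq : β ^ (q ^ ℓ) = β⁻¹ := by
    have h : β ^ (q ^ ℓ) * β = 1 := by
      rw [← pow_succ, ← hn, hβn]
    exact eq_inv_of_mul_eq_one_left h
  set d := δ - 2 with hd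
  set b : Fin n → E := fun i => algebraMap F E (c i) with hb
  -- the "negative exponent" parity checks
  have hneg : ∀ t : ℕ, t ≤ d → ∑ i : Fin n, b i * β⁻¹ ^ ((i : ℕ) * t) = 0 := by
    intro t ht
    have h0 := congrArg (iterateFrobenius E p (e * ℓ)) (hzero t ht)
    rw [map_zero, map_sum] at h0
    have hQ : p ^ (e * ℓ) = q ^ ℓ := by rw [pow_mul, hpe]
    calc ∑ i : Fin n, b i * β⁻¹ ^ ((i : ℕ) * t)
        = ∑ i : Fin n,
            iterateFrobenius E p (e * ℓ) (algebraMap F E (c i) * β ^ ((i : ℕ) * t)) := by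
          refine Finset.sum_congr rfl fun i _ => ?_
          rw [map_mul]
          have h1 : iterateFrobenius E p (e * ℓ) (algebraMap F E (c i)) = b i := by
            rw [iterateFrobenius_def, ← map_pow, hQ, ← hF,
              FiniteField.pow_card_pow]
          have h2 : iterateFrobenius E p (e * ℓ) (β ^ ((i : ℕ) * t))
              = β⁻¹ ^ ((i : ℕ) * t) := by
            rw [iterateFrobenius_def, pow_right_comm, hQ, hβq]
          rw [h1, h2]
      _ = 0 := h0
  by_contra hlt
  push_neg at hlt
  set S := Finset.univ.filter fun i : Fin n => c i ≠ 0 with hS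
  set w := S.card with hwdef
  have hw : w ≤ 2 * d + 1 := by omega
  have hSne : S.Nonempty := by
    obtain ⟨i, hi⟩ := Function.ne_iff.mp hc
    exact ⟨i, Finset.mem_filter.mpr ⟨Finset.mem_univ _, hi⟩⟩
  set σ : Fin w → {x // x ∈ S} := fun k => S.equivFin.symm k with hσ
  set f : Fin w → E := fun k => β ^ (((σ k : Fin n) : ℕ)) with hf'
  set a : Fin w → E := fun k => b (σ k) * β⁻¹ ^ (((σ k : Fin n) : ℕ) * d) with ha'
  have hf : Function.Injective f := by
    intro k1 k2 h
    have h' := hβ.pow_inj (σ k1 : Fin n).isLt (σ k2 : Fin n).isLt h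
    exact S.equivFin.symm.injective (Subtype.ext (Fin.ext h'))
  -- set up the Vandermonde equations
  have key : ∀ j : Fin w, ∑ k, a k * f k ^ (j : ℕ) = 0 := by
    intro j
    have hg : ∀ i : Fin n,
        (fun i : Fin n => b i * β⁻¹ ^ ((i : ℕ) * d) * β ^ ((i : ℕ) * (j : ℕ))) i = 0 →
        True := fun _ _ => trivial
    set g : Fin n → E :=
      fun i => b i * β⁻¹ ^ ((i : ℕ) * d) * β ^ ((i : ℕ) * (j : ℕ)) with hgdef
    have hsum : ∑ k, a k * f k ^ (j : ℕ) = ∑ i : Fin n, g i := by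
      have e1 : ∑ k, a k * f k ^ (j : ℕ) = ∑ x : {x // x ∈ S}, g x := by
        refine Fintype.sum_equiv S.equivFin.symm _ _ fun k => ?_
        simp only [ha', hf', hgdef, ← pow_mul, hσ]
      rw [e1, Finset.sum_coe_sort S g]
      refine Finset.sum_subset (Finset.subset_univ S) fun i _ hi => ?_
      have : c i = 0 := by
        by_contra hne
        exact hi (Finset.mem_filter.mpr ⟨Finset.mem_univ _, hne⟩)
      simp [hgdef, hb, this]
    rw [hsum]
    have hjw : (j : ℕ) < w := j.isLt
    by_cases hj : (j : ℕ) ≤ d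
    · have : ∀ i : Fin n, g i = b i * β⁻¹ ^ ((i : ℕ) * (d - (j : ℕ))) := by
        intro i
        have hsplit : (i : ℕ) * d = (i : ℕ) * (d - (j : ℕ)) + (i : ℕ) * (j : ℕ) := by
          rw [← Nat.mul_add, Nat.sub_add_cancel hj]
        rw [hgdef]
        simp only []
        rw [hsplit, pow_add, mul_assoc, mul_assoc, ← mul_pow, inv_mul_cancel₀ hβ0,
          one_pow, mul_one]
      rw [Finset.sum_congr rfl fun i _ => this i]
      exact hneg (d - (j : ℕ)) (Nat.sub_le _ _)
    · push_neg at hj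
      have : ∀ i : Fin n, g i = b i * β ^ ((i : ℕ) * ((j : ℕ) - d)) := by
        intro i
        have hsplit : (i : ℕ) * (j : ℕ) = (i : ℕ) * ((j : ℕ) - d) + (i : ℕ) * d := by
          rw [← Nat.mul_add]
          congr 1
          omega
        rw [hgdef]
        simp only []
        rw [hsplit, pow_add, mul_comm (β ^ ((i : ℕ) * ((j : ℕ) - d))), ← mul_assoc,
          mul_assoc (b i), ← mul_pow, inv_mul_cancel₀ hβ0, one_pow, mul_one]
      rw [Finset.sum_congr rfl fun i _ => this i]
      exact hzero ((j : ℕ) - d) (by omega)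
  have ha : a = 0 := Matrix.eq_zero_of_forall_pow_sum_mul_pow_eq_zero hf key
  obtain ⟨i0, hi0⟩ := hSne
  have h0 : a (S.equivFin ⟨i0, hi0⟩) = 0 := by rw [ha]; rfl
  rw [ha'] at h0
  simp only [hσ, Equiv.symm_apply_apply] at h0
  rcases mul_eq_zero.mp h0 with h | h
  · have : c i0 = 0 := by
      have := (algebraMap F E).injective (h.trans (map_zero _).symm)
      simpa using this
    exact (Finset.mem_filter.mp hi0).2 this
  · exact pow_ne_zero _ (inv_ne_zero hβ0) h
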